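/- arXiv:1611.10117 — 3 statements merged into one kernel-verified Lean document; each statement's English description precedes it below -/
import Mathlib

section
/- Let G be a graph on [n] with a proper interval labeling, let H be the associated bipartite graph with edges {x_r, y_s} for edges {r,s} of G with r < s, and let S ⊆ V(H) with S ∩ X = {x_{k_1},…,x_{k_j}} and S ∩ Y = {y_{k_{j+1}},…,y_{k_{i+1}}}, both nonempty. If {x_{k_r}, y_{k_s}} is an edge of H for all 1 ≤ r ≤ j and j+1 ≤ s ≤ i+1, then {k_1, …, k_{i+1}} is a clique of G. -/
/-- Let `G` be a proper interval graph on `[n]` and `H` the associated bipartite graph.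
If `S ∩ X = {x_{k_1},…,x_{k_j}}` and `S ∩ Y = {y_{k_{j+1}},…,y_{k_{i+1}}}` (both nonempty,
each listed increasingly) and every `x_{k_r}` (`r ≤ j`) is adjacent in `H` to every
`y_{k_s}` (`s > j`), then `{k_1,…,k_{i+1}}` is a clique of `G`. -/
theorem stmt6 {n : ℕ} (G : SimpleGraph (Fin n))
    (hPI : ∀ i j k : Fin n, i < j → j < k → G.Adj i k → G.Adj i j ∧ G.Adj j k)
    (H : SimpleGraph (Fin n ⊕ Fin n))
    (hH : ∀ u v, H.Adj u v ↔
      ∃ r s : Fin n, r < s ∧ G.Adj r s ∧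
        ((u = Sum.inl r ∧ v = Sum.inr s) ∨ (u = Sum.inr s ∧ v = Sum.inl r)))
    (i j : ℕ) (hj1 : 1 ≤ j) (hji : j ≤ i)
    (k : Fin (i + 1) → Fin n)
    (hmonoX : ∀ r r' : Fin (i + 1), r < r' → (r' : ℕ) < j → k r < k r')
    (hmonoY : ∀ s s' : Fin (i + 1), j ≤ (s : ℕ) → s < s' → k s < k s')
    (hadj : ∀ r s : Fin (i + 1), (r : ℕ) < j → j ≤ (s : ℕ) →
      H.Adj (Sum.inl (k r)) (Sum.inr (k s))) :
    G.IsClique (Set.range k) := by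
  have key : ∀ r s : Fin (i + 1), (r : ℕ) < j → j ≤ (s : ℕ) →
      k r < k s ∧ G.Adj (k r) (k s) := by
    intro r s hr hs
    obtain ⟨r', s', hlt, hadj', h⟩ := (hH _ _).1 (hadj r s hr hs)
    rcases h with ⟨h1, h2⟩ | ⟨h1, h2⟩
    · cases h1; cases h2; exact ⟨hlt, hadj'⟩
    · exact absurd h1 (by simp)
  have hz : ((⟨0, by omega⟩ : Fin (i + 1)) : ℕ) < j := by show 0 < j; omega
  have hs0 : j ≤ ((⟨j, by omega⟩ : Fin (i + 1)) : ℕ) := le_refl _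
  intro u hu v hv huv
  obtain ⟨a, rfl⟩ := hu
  obtain ⟨b, rfl⟩ := hv
  rcases lt_or_ge (a : ℕ) j with ha | ha <;> rcases lt_or_ge (b : ℕ) j with hb | hb
  · rcases lt_trichotomy a b with hab | hab | hab
    · have h1 := hmonoX a b hab hb
      obtain ⟨h2, h3⟩ := key b ⟨j, by omega⟩ hb hs0
      exact (hPI _ _ _ h1 h2 (key a ⟨j, by omega⟩ ha hs0).2).1
    · exact absurd (congrArg k hab) huv
    · have h1 := hmonoX b a hab ha
      obtain ⟨h2, h3⟩ := key a ⟨j, by omega⟩ ha hs0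
      exact ((hPI _ _ _ h1 h2 (key b ⟨j, by omega⟩ hb hs0).2).1).symm
  · exact (key a b ha hb).2
  · exact ((key b a hb ha).2).symm
  · rcases lt_trichotomy a b with hab | hab | hab
    · have h1 := hmonoY a b ha hab
      obtain ⟨h2, h3⟩ := key ⟨0, by omega⟩ a hz ha
      exact (hPI _ _ _ h2 h1 (key ⟨0, by omega⟩ b hz hb).2).2
    · exact absurd (congrArg k hab) huv
    · have h1 := hmonoY b a hb hab
      obtain ⟨h2, h3⟩ := key ⟨0, by omega⟩ b hz hb
      exact ((hPI _ _ _ h2 h1 (key ⟨0, by omega⟩ a hz ha).2).2).symm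
end

section
/- There exists a graph G (namely the star on vertex set {1,2,3,4} with edges {1,2},{1,3},{1,4}) such that the set {2,3,4} is not a clique of G but the associated bipartite graph H (with edges {x_r,y_s} for edges {r,s} of G, r < s) contains a subset S of 3 vertices whose complement-induced subgraph H^c_S has exactly two connected components while the corresponding vertex set of G is not a clique; concretely, S = {x_1, y_2, y_3} satisfies that H^c_S has two connected components but {1,2,3} is not a clique of G. -/
/-- For the star graph `G` on `{1,2,3,4}` with center `1` (here vertex `0` of `Fin 4`),
the set `{2,3,4}` is not a clique, yet `S = {x_1, y_2, y_3}` is a subset of `3` vertices of the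
associated bipartite graph `H` such that `Hᶜ_S` has exactly two connected components while the
corresponding vertex set `{1,2,3}` of `G` is not a clique. -/
theorem stmt7 (G : SimpleGraph (Fin 4))
    (hG : ∀ u v, G.Adj u v ↔ u ≠ v ∧ (u = 0 ∨ v = 0))
    (H : SimpleGraph (Fin 4 ⊕ Fin 4))
    (hH : ∀ u v, H.Adj u v ↔
      ∃ r s : Fin 4, r < s ∧ G.Adj r s ∧
        ((u = Sum.inl r ∧ v = Sum.inr s) ∨ (u = Sum.inr s ∧ v = Sum.inl r))) :
    ¬ G.IsClique {1, 2, 3} ∧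
    (∃ c₁ c₂ : (SimpleGraph.induce
        ({Sum.inl 0, Sum.inr 1, Sum.inr 2} : Set (Fin 4 ⊕ Fin 4)) Hᶜ).ConnectedComponent,
        c₁ ≠ c₂ ∧ ∀ c, c = c₁ ∨ c = c₂) ∧
    ¬ G.IsClique {0, 1, 2} := by
  have h01 : H.Adj (Sum.inl 0) (Sum.inr 1) :=
    (hH _ _).mpr ⟨0, 1, by decide, (hG 0 1).mpr (by decide), Or.inl ⟨rfl, rfl⟩⟩
  have h02 : H.Adj (Sum.inl 0) (Sum.inr 2) :=
    (hH _ _).mpr ⟨0, 2, by decide, (hG 0 2).mpr (by decide), Or.inl ⟨rfl, rfl⟩⟩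
  have h12 : ¬ H.Adj (Sum.inr 1) (Sum.inr 2) := by
    intro h
    obtain ⟨r, s, -, -, h | h⟩ := (hH _ _).mp h
    · exact absurd h.1 (by simp)
    · exact absurd h.2 (by simp)
  set S : Set (Fin 4 ⊕ Fin 4) := {Sum.inl 0, Sum.inr 1, Sum.inr 2} with hS
  set K := SimpleGraph.induce S Hᶜ with hK
  have hv0 : (Sum.inl 0 : Fin 4 ⊕ Fin 4) ∈ S := by simp [hS]
  have hv1 : (Sum.inr 1 : Fin 4 ⊕ Fin 4) ∈ S := by simp [hS]
  have hv2 : (Sum.inr 2 : Fin 4 ⊕ Fin 4) ∈ S := by simp [hS]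
  have hiso : ∀ w : S, ¬ K.Adj ⟨Sum.inl 0, hv0⟩ w := by
    rintro ⟨w, hw⟩ hadj
    have hc : Hᶜ.Adj (Sum.inl 0) w := hadj
    rw [SimpleGraph.compl_adj] at hc
    simp only [hS, Set.mem_insert_iff, Set.mem_singleton_iff] at hw
    rcases hw with rfl | rfl | rfl
    · exact hc.1 rfl
    · exact hc.2 h01
    · exact hc.2 h02
  have hreach : ∀ u : S, K.Reachable ⟨Sum.inl 0, hv0⟩ u → u = ⟨Sum.inl 0, hv0⟩ := by
    intro u hr
    obtain ⟨p⟩ := hr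
    cases p with
    | nil => rfl
    | cons h _ => exact absurd h (hiso _)
  have hadj12 : K.Adj ⟨Sum.inr 1, hv1⟩ ⟨Sum.inr 2, hv2⟩ := by
    show Hᶜ.Adj (Sum.inr 1) (Sum.inr 2)
    rw [SimpleGraph.compl_adj]
    exact ⟨by simp, h12⟩
  refine ⟨?_, ⟨K.connectedComponentMk ⟨Sum.inl 0, hv0⟩,
      K.connectedComponentMk ⟨Sum.inr 1, hv1⟩, ?_, ?_⟩, ?_⟩
  · intro h
    have := h (show (1 : Fin 4) ∈ ({1,2,3} : Set (Fin 4)) by simp)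
      (show (2 : Fin 4) ∈ ({1,2,3} : Set (Fin 4)) by simp) (by decide)
    rw [hG] at this
    rcases this.2 with h' | h' <;> exact absurd h' (by decide)
  · intro h
    have := hreach _ ((SimpleGraph.ConnectedComponent.eq).mp h.symm).symm
    simp at this
  · intro c
    refine SimpleGraph.ConnectedComponent.ind (fun v => ?_) c
    obtain ⟨v, hv⟩ := v
    have hv' := hv
    simp only [hS, Set.mem_insert_iff, Set.mem_singleton_iff] at hv'
    rcases hv' with rfl | rfl | rfl
    · exact Or.inl rfl
    · exact Or.inr rfl
    · exact Or.inr ((SimpleGraph.ConnectedComponent.eq).mpr hadj12.reachable).symm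
  · intro h
    have := h (show (1 : Fin 4) ∈ ({0,1,2} : Set (Fin 4)) by simp)
      (show (2 : Fin 4) ∈ ({0,1,2} : Set (Fin 4)) by simp) (by decide)
    rw [hG] at this
    rcases this.2 with h' | h' <;> exact absurd h' (by decide)
end

section
/- Let G be a connected graph on [n] with a proper interval labeling whose clique complex has facets the intervals [a_1,b_1],…,[a_r,b_r] with 1 = a_1 < a_2 < ⋯ < a_r and b_r = n. If r ≥ 3, then G contains an induced path of length at least 3; specifically the vertices 1, a_2, b_2, b_3 (in this order) induce a path of length 3 in G. -/
/-- Let `G` be a connected proper interval graph on `[n]` whose clique complex has facets the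
intervals `[a 1, b 1], …, [a r, b r]` with `1 = a 1 < a 2 < ⋯ < a r`, `b 1 < ⋯ < b r = n`.
If `r ≥ 3` then the vertices `1, a 2, b 2, b 3` induce a path of length `3` in `G`. -/
theorem stmt8 (n r : ℕ) (G : SimpleGraph ℕ) (a b : ℕ → ℕ)
    (hr : 3 ≤ r)
    (ha1 : a 1 = 1) (hbr : b r = n)
    (hamono : ∀ i j, 1 ≤ i → i < j → j ≤ r → a i < a j)
    (hbmono : ∀ i j, 1 ≤ i → i < j → j ≤ r → b i < b j)
    (hab : ∀ i, 1 ≤ i → i ≤ r → a i ≤ b i)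
    (hov : ∀ i, 1 ≤ i → i < r → a (i + 1) ≤ b i)
    (hE : ∀ u v, G.Adj u v ↔ u ≠ v ∧
      ∃ i, 1 ≤ i ∧ i ≤ r ∧ a i ≤ u ∧ u ≤ b i ∧ a i ≤ v ∧ v ≤ b i) :
    G.Adj 1 (a 2) ∧ G.Adj (a 2) (b 2) ∧ G.Adj (b 2) (b 3) ∧
      ¬ G.Adj 1 (b 2) ∧ ¬ G.Adj 1 (b 3) ∧ ¬ G.Adj (a 2) (b 3) := by
  have h2r : 2 ≤ r := by omega
  have h12 : a 1 < a 2 := hamono 1 2 le_rfl one_lt_two h2r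
  have h23 : a 2 < a 3 := hamono 2 3 one_le_two (by omega) hr
  have hb12 : b 1 < b 2 := hbmono 1 2 le_rfl one_lt_two h2r
  have hb23 : b 2 < b 3 := hbmono 2 3 one_le_two (by omega) hr
  have ho1 : a 2 ≤ b 1 := hov 1 le_rfl (by omega)
  have ho2 : a 3 ≤ b 2 := hov 2 one_le_two (by omega)
  have hab2 : a 2 ≤ b 2 := hab 2 one_le_two h2r
  have hab3 : a 3 ≤ b 3 := hab 3 (by omega) hr
  refine ⟨?_, ?_, ?_, ?_, ?_, ?_⟩
  · rw [hE]
    exact ⟨by omega, 1, le_rfl, by omega, by omega, by omega, by omega, ho1⟩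
  · rw [hE]
    exact ⟨by omega, 2, one_le_two, h2r, le_rfl, hab2, hab2, le_rfl⟩
  · rw [hE]
    exact ⟨by omega, 3, by omega, hr, ho2, le_of_lt hb23, hab3, le_rfl⟩
  · rw [hE]
    rintro ⟨-, i, hi1, hir, hai, h1bi, habi, hb2bi⟩
    rcases eq_or_lt_of_le hi1 with h | h
    · subst h; omega
    · have := hamono 1 i le_rfl h hir; omega
  · rw [hE]
    rintro ⟨-, i, hi1, hir, hai, h1bi, habi, hb3bi⟩
    rcases eq_or_lt_of_le hi1 with h | h
    · subst h; have := hbmono 1 3 le_rfl (by omega) hr; omega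
    · have := hamono 1 i le_rfl h hir; omega
  · rw [hE]
    rintro ⟨-, i, hi1, hir, hai, ha2bi, habi, hb3bi⟩
    have hi2 : i ≤ 2 := by
      by_contra h
      have := hamono 2 i one_le_two (by omega) hir; omega
    have : b i < b 3 := hbmono i 3 hi1 (by omega) hr
    omega
end
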